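/- Define W(x) = [ 9·(1 + √(1 − 4x/27))^{4/3} − 2^{4/3}·x^{2/3} ] / ( 2^{5/3}·3^{3/2}·π·x^{1/3}·(1 + √(1 − 4x/27))^{2/3} ) for x ∈ (0, 27/4). Then W(x) ≥ 0 on (0, 27/4) and for every natural number m, ∫₀^{27/4} x^m · W(x) dx = A_m(3, 2) = 2·binom(3m+2, m) / (3m+2). -/

import Mathlib

open Real

/-- The Raney numbers (two-parameter Fuss–Catalan numbers):
`A 0 (p,r) = 1` and `A m (p,r) = (r/m!)·∏_{i=1}^{m−1} (m·p + r − i)` for `m ≥ 1`. -/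
noncomputable def raney (p r : ℝ) : ℕ → ℝ
  | 0 => 1
  | (m + 1) => (r / (Nat.factorial (m + 1) : ℝ)) *
      ∏ i ∈ Finset.Icc 1 m, (((m : ℝ) + 1) * p + r - (i : ℝ))

section FussCatalanAux
open MeasureTheory

/- ### Raney closed form -/

lemma prodIcc : ∀ (n k : ℕ), (((k + n).factorial : ℝ)) =
    (k.factorial : ℝ) * ∏ i ∈ Finset.Icc 1 n, ((k : ℝ) + (n : ℝ) + 1 - (i : ℝ))
  | 0, k => by simp
  | (n+1), k => by
    rw [Finset.prod_Icc_succ_top (Nat.le_add_left 1 n)]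
    have h := prodIcc n (k+1)
    have hc : (∏ i ∈ Finset.Icc 1 n, ((k : ℝ) + ((n:ℝ)+1) + 1 - (i : ℝ)))
        = ∏ i ∈ Finset.Icc 1 n, (((k+1 : ℕ) : ℝ) + (n : ℝ) + 1 - (i : ℝ)) := by
      refine Finset.prod_congr rfl fun i _ => by push_cast; ring
    rw [← hc] at h
    have h2 : k + (n+1) = (k+1) + n := by omega
    have hcast : ((n:ℝ) + 1) = ((n+1 : ℕ) : ℝ) := by push_cast; ring
    rw [h2, h, hcast]
    push_cast [Nat.factorial_succ]
    ring

lemma raney_eq (m : ℕ) : raney 3 2 m =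
    2 * ((3*m+1).factorial : ℝ) / ((m.factorial : ℝ) * ((2*m+2).factorial : ℝ)) := by
  cases m with
  | zero => simp [raney]
  | succ m =>
    have key := prodIcc m (2*m+4)
    have hkey : (2*m+4) + m = 3*m+4 := by omega
    rw [hkey] at key
    have hne : ((2*m+4).factorial : ℝ) ≠ 0 := by positivity
    have hprod : ∏ i ∈ Finset.Icc 1 m, (((m : ℝ) + 1) * 3 + 2 - (i : ℝ))
        = ((3*m+4).factorial : ℝ) / ((2*m+4).factorial : ℝ) := by
      rw [eq_div_iff hne]
      have hcg : ∏ i ∈ Finset.Icc 1 m, (((m : ℝ) + 1) * 3 + 2 - (i : ℝ))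
          = ∏ i ∈ Finset.Icc 1 m, (((2*m+4 : ℕ) : ℝ) + (m:ℝ) + 1 - (i : ℝ)) :=
        Finset.prod_congr rfl fun i _ => by push_cast; ring
      rw [hcg]; linarith [key]
    have h4 : (3*(m+1)+1) = 3*m+4 := by ring
    have h6 : (2*(m+1)+2) = 2*m+4 := by ring
    rw [raney, hprod, h4, h6]
    have hne2 : ((m+1).factorial : ℝ) ≠ 0 := by positivity
    field_simp

lemma raney_choose (m : ℕ) :
    2 * ((3*m+1).factorial : ℝ) / ((m.factorial : ℝ) * ((2*m+2).factorial : ℝ))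
      = 2 * (Nat.choose (3 * m + 2) m : ℝ) / (3 * (m : ℝ) + 2) := by
  have key := Nat.choose_mul_factorial_mul_factorial (show m ≤ 3*m+2 by omega)
  have h1 : 3*m+2-m = 2*m+2 := by omega
  rw [h1] at key
  have keyR : ((Nat.choose (3*m+2) m : ℝ)) * (m.factorial : ℝ) * ((2*m+2).factorial : ℝ)
      = ((3*m+2).factorial : ℝ) := by exact_mod_cast congrArg (Nat.cast : ℕ → ℝ) key
  have hfs : (((3*m+2).factorial : ℕ) : ℝ) = (3*(m:ℝ)+2) * ((3*m+1).factorial : ℝ) := by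
    rw [show 3*m+2 = (3*m+1)+1 from rfl, Nat.factorial_succ]
    push_cast; ring
  rw [hfs] at keyR
  have hm : ((m.factorial : ℕ) : ℝ) ≠ 0 := by positivity
  have hm2 : (((2*m+2).factorial : ℕ) : ℝ) ≠ 0 := by positivity
  have hm3 : (3*(m:ℝ)+2) ≠ 0 := by positivity
  field_simp
  linear_combination -keyR

/- ### Real Beta function -/

lemma betaCongr {a b : ℝ} :
    ∀ x ∈ Set.uIcc (0:ℝ) 1,
      (x:ℂ) ^ ((a:ℂ) - 1) * (1 - (x:ℂ)) ^ ((b:ℂ) - 1)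
        = ((x ^ (a-1) * (1-x) ^ (b-1) : ℝ) : ℂ) := by
  intro x hx
  rw [Set.uIcc_of_le (by norm_num : (0:ℝ) ≤ 1)] at hx
  rw [Complex.ofReal_mul, Complex.ofReal_cpow hx.1, Complex.ofReal_cpow (by linarith [hx.2])]
  push_cast
  ring

lemma realBeta {a b : ℝ} (ha : 0 < a) (hb : 0 < b) :
    ∫ x in (0:ℝ)..1, x ^ (a-1) * (1-x) ^ (b-1)
      = Real.Gamma a * Real.Gamma b / Real.Gamma (a+b) := by
  have ha' : 0 < (a:ℂ).re := by simpa using ha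
  have hb' : 0 < (b:ℂ).re := by simpa using hb
  have key := Complex.Gamma_mul_Gamma_eq_betaIntegral ha' hb'
  have hints : Complex.betaIntegral a b
      = ((∫ x in (0:ℝ)..1, x ^ (a-1) * (1-x) ^ (b-1) : ℝ) : ℂ) := by
    rw [Complex.betaIntegral, ← intervalIntegral.integral_ofReal]
    exact intervalIntegral.integral_congr betaCongr
  rw [hints, ← Complex.ofReal_add, Complex.Gamma_ofReal, Complex.Gamma_ofReal,
    Complex.Gamma_ofReal] at key
  have key2 : Real.Gamma a * Real.Gamma b
      = Real.Gamma (a+b) * ∫ x in (0:ℝ)..1, x ^ (a-1) * (1-x) ^ (b-1) := by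
    exact_mod_cast key
  have hne : Real.Gamma (a+b) ≠ 0 := (Real.Gamma_pos_of_pos (by linarith)).ne'
  rw [eq_div_iff hne]
  linarith [key2]

lemma realBetaIntegrable {a b : ℝ} (ha : 0 < a) (hb : 0 < b) :
    IntervalIntegrable (fun x : ℝ => x ^ (a-1) * (1-x) ^ (b-1)) volume 0 1 := by
  have ha' : 0 < (a:ℂ).re := by simpa using ha
  have hb' : 0 < (b:ℂ).re := by simpa using hb
  have hc := Complex.betaIntegral_convergent ha' hb'
  rw [intervalIntegrable_iff] at hc ⊢
  refine hc.re.congr ?_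
  refine (ae_restrict_iff' measurableSet_uIoc).2 (Filter.Eventually.of_forall fun x hx => ?_)
  rw [Set.uIoc_of_le (by norm_num : (0:ℝ) ≤ 1)] at hx
  have h := betaCongr (a := a) (b := b) x
    (by rw [Set.uIcc_of_le (by norm_num : (0:ℝ) ≤ 1)]; exact ⟨hx.1.le, hx.2⟩)
  show ((x:ℂ) ^ ((a:ℂ) - 1) * (1 - (x:ℂ)) ^ ((b:ℂ) - 1)).re = _
  rw [h, Complex.ofReal_re]

/- ### Gamma values -/

lemma sqrt3_pos : (0:ℝ) < Real.sqrt 3 := Real.sqrt_pos.2 (by norm_num)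
lemma sqrt3_sq : (Real.sqrt 3) ^ 2 = 3 := Real.sq_sqrt (by norm_num)

lemma P0 : Real.Gamma ((2:ℝ)/3) * Real.Gamma ((4:ℝ)/3) = 2 * Real.sqrt 3 * π / 9 := by
  have h := Real.Gamma_mul_Gamma_one_sub (1/3)
  have h2 : (1:ℝ) - 1/3 = 2/3 := by norm_num
  have h3 : π * (1/3) = π / 3 := by ring
  rw [h2, h3, Real.sin_pi_div_three] at h
  have h4 : Real.Gamma ((4:ℝ)/3) = (1/3) * Real.Gamma (1/3) := by
    have : (4:ℝ)/3 = 1/3 + 1 := by norm_num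
    rw [this, Real.Gamma_add_one (by norm_num)]
  rw [h4]
  have hsne := sqrt3_pos.ne'
  field_simp at h
  linear_combination (Real.sqrt 3 / 9) * h -
    (Real.Gamma (1/3) * Real.Gamma (2/3) / 9) * sqrt3_sq

lemma Pval : ∀ m : ℕ, Real.Gamma ((m:ℝ) + 2/3) * Real.Gamma ((m:ℝ) + 4/3)
    = 2 * Real.sqrt 3 * π * ((3*m+1).factorial : ℝ) / (9 * 27^m * (m.factorial : ℝ))
  | 0 => by
    simpa using P0
  | (m+1) => by
    have h1 : ((m+1 : ℕ):ℝ) + 2/3 = ((m:ℝ) + 2/3) + 1 := by push_cast; ring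
    have h2 : ((m+1 : ℕ):ℝ) + 4/3 = ((m:ℝ) + 4/3) + 1 := by push_cast; ring
    have hm : (0:ℝ) ≤ (m:ℝ) := Nat.cast_nonneg m
    rw [h1, h2, Real.Gamma_add_one (by positivity), Real.Gamma_add_one (by positivity),
      mul_mul_mul_comm, Pval m]
    have hf1 : ((3*(m+1)+1).factorial : ℝ)
        = (3*(m:ℝ)+4) * (3*(m:ℝ)+3) * (3*(m:ℝ)+2) * ((3*m+1).factorial : ℝ) := by
      have e1 : 3*(m+1)+1 = (3*m+3)+1 := by omega
      rw [e1, Nat.factorial_succ]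
      have e2 : (3*m+3) = (3*m+2)+1 := by omega
      rw [e2, Nat.factorial_succ]
      have e3 : (3*m+2) = (3*m+1)+1 := by omega
      rw [e3, Nat.factorial_succ]
      push_cast; ring
    have hf2 : (((m+1)).factorial : ℝ) = ((m:ℝ)+1) * (m.factorial : ℝ) := by
      rw [Nat.factorial_succ]; push_cast; ring
    rw [hf1, hf2]
    have hmf : (m.factorial : ℝ) ≠ 0 := by positivity
    have h27 : (27:ℝ)^(m+1) = 27 * 27^m := by ring
    rw [h27]
    field_simp
    ring

/- ### The symmetrized Beta combination -/

noncomputable def Gf (m : ℕ) (x : ℝ) : ℝ :=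
  x ^ ((m:ℝ) + 2/3 - 1) * (1-x) ^ ((m:ℝ) + 7/3 - 1)
  - x ^ ((m:ℝ) + 5/3 - 1) * (1-x) ^ ((m:ℝ) + 4/3 - 1)
  - x ^ ((m:ℝ) + 4/3 - 1) * (1-x) ^ ((m:ℝ) + 5/3 - 1)
  + x ^ ((m:ℝ) + 7/3 - 1) * (1-x) ^ ((m:ℝ) + 2/3 - 1)

lemma GfIntegrable (m : ℕ) : IntervalIntegrable (Gf m) volume 0 1 := by
  have hm : (0:ℝ) ≤ (m:ℝ) := Nat.cast_nonneg m
  have h1 := realBetaIntegrable (a := (m:ℝ)+2/3) (b := (m:ℝ)+7/3) (by positivity) (by positivity)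
  have h2 := realBetaIntegrable (a := (m:ℝ)+5/3) (b := (m:ℝ)+4/3) (by positivity) (by positivity)
  have h3 := realBetaIntegrable (a := (m:ℝ)+4/3) (b := (m:ℝ)+5/3) (by positivity) (by positivity)
  have h4 := realBetaIntegrable (a := (m:ℝ)+7/3) (b := (m:ℝ)+2/3) (by positivity) (by positivity)
  exact ((h1.sub h2).sub h3).add h4

lemma intG (m : ℕ) : ∫ x in (0:ℝ)..1, Gf m x
    = (4/3) * (Real.Gamma ((m:ℝ)+2/3) * Real.Gamma ((m:ℝ)+4/3)) / ((2*m+2).factorial : ℝ) := by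
  have hm : (0:ℝ) ≤ (m:ℝ) := Nat.cast_nonneg m
  have h1 := realBetaIntegrable (a := (m:ℝ)+2/3) (b := (m:ℝ)+7/3) (by positivity) (by positivity)
  have h2 := realBetaIntegrable (a := (m:ℝ)+5/3) (b := (m:ℝ)+4/3) (by positivity) (by positivity)
  have h3 := realBetaIntegrable (a := (m:ℝ)+4/3) (b := (m:ℝ)+5/3) (by positivity) (by positivity)
  have h4 := realBetaIntegrable (a := (m:ℝ)+7/3) (b := (m:ℝ)+2/3) (by positivity) (by positivity)
  have key : ∫ x in (0:ℝ)..1, Gf m x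
      = ((∫ x in (0:ℝ)..1, x ^ ((m:ℝ)+2/3-1) * (1-x) ^ ((m:ℝ)+7/3-1))
        - ∫ x in (0:ℝ)..1, x ^ ((m:ℝ)+5/3-1) * (1-x) ^ ((m:ℝ)+4/3-1))
        - (∫ x in (0:ℝ)..1, x ^ ((m:ℝ)+4/3-1) * (1-x) ^ ((m:ℝ)+5/3-1))
        + ∫ x in (0:ℝ)..1, x ^ ((m:ℝ)+7/3-1) * (1-x) ^ ((m:ℝ)+2/3-1) := by
    rw [← intervalIntegral.integral_sub h1 h2, ← intervalIntegral.integral_sub (h1.sub h2) h3,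
      ← intervalIntegral.integral_add ((h1.sub h2).sub h3) h4]
    rfl
  rw [key, realBeta (by positivity) (by positivity), realBeta (by positivity) (by positivity),
    realBeta (by positivity) (by positivity), realBeta (by positivity) (by positivity)]
  have hsum1 : ((m:ℝ)+2/3) + ((m:ℝ)+7/3) = ((2*m+2 : ℕ) : ℝ) + 1 := by push_cast; ring
  have hsum2 : ((m:ℝ)+5/3) + ((m:ℝ)+4/3) = ((2*m+2 : ℕ) : ℝ) + 1 := by push_cast; ring
  have hsum3 : ((m:ℝ)+4/3) + ((m:ℝ)+5/3) = ((2*m+2 : ℕ) : ℝ) + 1 := by push_cast; ring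
  have hsum4 : ((m:ℝ)+7/3) + ((m:ℝ)+2/3) = ((2*m+2 : ℕ) : ℝ) + 1 := by push_cast; ring
  rw [hsum1, hsum2, hsum3, hsum4, Real.Gamma_nat_eq_factorial]
  have hg1 : Real.Gamma ((m:ℝ)+7/3) = ((m:ℝ)+4/3) * Real.Gamma ((m:ℝ)+4/3) := by
    have e : (m:ℝ)+7/3 = ((m:ℝ)+4/3) + 1 := by ring
    rw [e, Real.Gamma_add_one (by positivity)]
  have hg2 : Real.Gamma ((m:ℝ)+5/3) = ((m:ℝ)+2/3) * Real.Gamma ((m:ℝ)+2/3) := by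
    have e : (m:ℝ)+5/3 = ((m:ℝ)+2/3) + 1 := by ring
    rw [e, Real.Gamma_add_one (by positivity)]
  rw [hg1, hg2]
  have hfne : (((2*m+2).factorial : ℝ)) ≠ 0 := by positivity
  field_simp
  ring

lemma Gf_sym (m : ℕ) (x : ℝ) : Gf m (1 - x) = Gf m x := by
  simp only [Gf, sub_sub_cancel]
  ring

lemma Gf_half (m : ℕ) : ∫ x in (0:ℝ)..(1/2), Gf m x = (1/2) * ∫ x in (0:ℝ)..1, Gf m x := by
  have h1 : IntervalIntegrable (Gf m) volume 0 (1/2) :=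
    (GfIntegrable m).mono_set (by rw [Set.uIcc_of_le, Set.uIcc_of_le] <;> norm_num
      <;> exact Set.Icc_subset_Icc (le_refl _) (by norm_num))
  have h2 : IntervalIntegrable (Gf m) volume (1/2) 1 :=
    (GfIntegrable m).mono_set (by rw [Set.uIcc_of_le, Set.uIcc_of_le] <;> norm_num
      <;> exact Set.Icc_subset_Icc (by norm_num) (le_refl _))
  have hsplit := intervalIntegral.integral_add_adjacent_intervals h1 h2
  have hrefl : ∫ x in (1/2:ℝ)..1, Gf m x = ∫ x in (0:ℝ)..(1/2), Gf m x := by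
    have h := intervalIntegral.integral_comp_sub_left (a := (0:ℝ)) (b := 1/2) (Gf m) 1
    rw [show (1:ℝ)-(1/2) = 1/2 by norm_num, show (1:ℝ)-0 = 1 by norm_num] at h
    rw [← h]
    exact intervalIntegral.integral_congr fun x _ => (Gf_sym m x)
  rw [← hsplit, hrefl]
  ring

/- ### rpow helpers -/

lemma p13cube {y : ℝ} (hy : 0 ≤ y) : (y ^ ((1:ℝ)/3))^3 = y := by
  rw [← Real.rpow_natCast (y ^ ((1:ℝ)/3)) 3, ← Real.rpow_mul hy]
  norm_num

lemma p23 {y : ℝ} (hy : 0 ≤ y) : y ^ ((2:ℝ)/3) = (y ^ ((1:ℝ)/3))^2 := by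
  rw [← Real.rpow_natCast (y ^ ((1:ℝ)/3)) 2, ← Real.rpow_mul hy]
  norm_num

lemma p43 {y : ℝ} (hy : 0 ≤ y) : y ^ ((4:ℝ)/3) = (y ^ ((1:ℝ)/3))^4 := by
  rw [← Real.rpow_natCast (y ^ ((1:ℝ)/3)) 4, ← Real.rpow_mul hy]
  norm_num

lemma c27_23 : (27:ℝ) ^ ((2:ℝ)/3) = 9 := by
  rw [show (27:ℝ) = 3^(3:ℕ) by norm_num, ← Real.rpow_natCast 3 3,
    ← Real.rpow_mul (by norm_num : (0:ℝ) ≤ 3), show ((3:ℕ):ℝ) * (2/3) = ((2:ℕ):ℝ) by norm_num,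
    Real.rpow_natCast]
  norm_num

lemma c27_13 : (27:ℝ) ^ ((1:ℝ)/3) = 3 := by
  rw [show (27:ℝ) = 3^(3:ℕ) by norm_num, ← Real.rpow_natCast 3 3,
    ← Real.rpow_mul (by norm_num : (0:ℝ) ≤ 3), show ((3:ℕ):ℝ) * (1/3) = ((1:ℕ):ℝ) by norm_num,
    Real.rpow_natCast]
  norm_num

lemma c2_43 : (2:ℝ) ^ ((4:ℝ)/3) = 2 * 2 ^ ((1:ℝ)/3) := by
  rw [show (4:ℝ)/3 = 1 + 1/3 by norm_num, Real.rpow_add (by norm_num : (0:ℝ) < 2), Real.rpow_one]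

lemma c2_53 : (2:ℝ) ^ ((5:ℝ)/3) = 2 * 2 ^ ((2:ℝ)/3) := by
  rw [show (5:ℝ)/3 = 1 + 2/3 by norm_num, Real.rpow_add (by norm_num : (0:ℝ) < 2), Real.rpow_one]

lemma c3_32 : (3:ℝ) ^ ((3:ℝ)/2) = 3 * Real.sqrt 3 := by
  rw [show (3:ℝ)/2 = 1 + 1/2 by norm_num, Real.rpow_add (by norm_num : (0:ℝ) < 3), Real.rpow_one,
    ← Real.sqrt_eq_rpow]

/- ### The substitution identity -/

lemma Wsubst (m : ℕ) (u : ℝ) (hu0 : 0 < u) (hu2 : u < 1/2) :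
    |27 - 54*u| * ((27*u*(1-u)) ^ m *
      ((9 * (1 + Real.sqrt (1 - 4 * (27*u*(1-u)) / 27)) ^ ((4:ℝ)/3) -
        (2:ℝ) ^ ((4:ℝ)/3) * (27*u*(1-u)) ^ ((2:ℝ)/3)) /
       ((2:ℝ) ^ ((5:ℝ)/3) * (3:ℝ) ^ ((3:ℝ)/2) * π * (27*u*(1-u)) ^ ((1:ℝ)/3) *
        (1 + Real.sqrt (1 - 4 * (27*u*(1-u)) / 27)) ^ ((2:ℝ)/3))))
    = (27^(m+1) / (2*Real.sqrt 3*π)) * Gf m u := by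
  have hu1 : u < 1 := by linarith
  have hv0 : (0:ℝ) < 1 - u := by linarith
  set A := u ^ ((1:ℝ)/3) with hA
  set B := (1-u) ^ ((1:ℝ)/3) with hB
  set c := (2:ℝ) ^ ((1:ℝ)/3) with hc
  have hApos : 0 < A := Real.rpow_pos_of_pos hu0 _
  have hBpos : 0 < B := Real.rpow_pos_of_pos hv0 _
  have hcpos : 0 < c := Real.rpow_pos_of_pos (by norm_num) _
  have hA3 : A^3 = u := p13cube hu0.le
  have hB3 : B^3 = 1 - u := p13cube hv0.le
  have hs : Real.sqrt (1 - 4 * (27*u*(1-u)) / 27) = 1 - 2*u := by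
    rw [show 1 - 4 * (27*u*(1-u)) / 27 = (1-2*u)^2 by ring]
    exact Real.sqrt_sq (by linarith)
  rw [hs, show 1 + (1 - 2*u) = 2*(1-u) by ring]
  have e1 : (2*(1-u)) ^ ((4:ℝ)/3) = (2*c) * B^4 := by
    rw [Real.mul_rpow (by norm_num) hv0.le, c2_43, p43 hv0.le]
  have e2 : (27*u*(1-u)) ^ ((2:ℝ)/3) = 9 * A^2 * B^2 := by
    rw [Real.mul_rpow (by positivity) hv0.le, Real.mul_rpow (by norm_num) hu0.le,
      c27_23, p23 hu0.le, p23 hv0.le]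
  have e3 : (27*u*(1-u)) ^ ((1:ℝ)/3) = 3 * A * B := by
    rw [Real.mul_rpow (by positivity) hv0.le, Real.mul_rpow (by norm_num) hu0.le, c27_13]
  have e4 : (2*(1-u)) ^ ((2:ℝ)/3) = c^2 * B^2 := by
    rw [Real.mul_rpow (by norm_num) hv0.le, p23 (by norm_num : (0:ℝ) ≤ 2), p23 hv0.le]
  rw [e1, e2, e3, e4, c2_53, c3_32]
  have g1 : u ^ ((m:ℝ) + 2/3 - 1) = u^m / A := by
    rw [show (m:ℝ) + 2/3 - 1 = (m:ℝ) - 1/3 by ring, Real.rpow_sub hu0, Real.rpow_natCast]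
  have g2 : u ^ ((m:ℝ) + 5/3 - 1) = u^m * A^2 := by
    rw [show (m:ℝ) + 5/3 - 1 = (m:ℝ) + 2/3 by ring, Real.rpow_add hu0, Real.rpow_natCast,
      p23 hu0.le]
  have g3 : u ^ ((m:ℝ) + 4/3 - 1) = u^m * A := by
    rw [show (m:ℝ) + 4/3 - 1 = (m:ℝ) + 1/3 by ring, Real.rpow_add hu0, Real.rpow_natCast]
  have g4 : u ^ ((m:ℝ) + 7/3 - 1) = u^m * A^4 := by
    rw [show (m:ℝ) + 7/3 - 1 = (m:ℝ) + 4/3 by ring, Real.rpow_add hu0, Real.rpow_natCast,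
      p43 hu0.le]
  have g1' : (1-u) ^ ((m:ℝ) + 2/3 - 1) = (1-u)^m / B := by
    rw [show (m:ℝ) + 2/3 - 1 = (m:ℝ) - 1/3 by ring, Real.rpow_sub hv0, Real.rpow_natCast]
  have g2' : (1-u) ^ ((m:ℝ) + 5/3 - 1) = (1-u)^m * B^2 := by
    rw [show (m:ℝ) + 5/3 - 1 = (m:ℝ) + 2/3 by ring, Real.rpow_add hv0, Real.rpow_natCast,
      p23 hv0.le]
  have g3' : (1-u) ^ ((m:ℝ) + 4/3 - 1) = (1-u)^m * B := by
    rw [show (m:ℝ) + 4/3 - 1 = (m:ℝ) + 1/3 by ring, Real.rpow_add hv0, Real.rpow_natCast]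
  have g4' : (1-u) ^ ((m:ℝ) + 7/3 - 1) = (1-u)^m * B^4 := by
    rw [show (m:ℝ) + 7/3 - 1 = (m:ℝ) + 4/3 by ring, Real.rpow_add hv0, Real.rpow_natCast,
      p43 hv0.le]
  rw [Gf, g1, g2, g3, g4, g1', g2', g3', g4']
  rw [abs_of_pos (by linarith : (0:ℝ) < 27 - 54*u)]
  rw [show (27*u*(1-u))^m = 27^m * u^m * (1-u)^m by rw [mul_pow, mul_pow]]
  rw [show (27:ℝ) - 54*u = 27*(B^3 - A^3) by rw [hB3, hA3]; ring]
  have hsq := Real.sqrt_pos.2 (by norm_num : (0:ℝ) < 3)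
  rw [c2_43, p23 (by norm_num : (0:ℝ) ≤ 2)]
  have hc3 : c^3 = 2 := p13cube (by norm_num)
  field_simp
  linear_combination (-243*c*27^m*(B^5 + A^5 - B^2*A^3 - B^3*A^2)) * hc3

/- ### Change of variables -/

lemma chgvar (g : ℝ → ℝ) :
    ∫ x in Set.Ioo (0:ℝ) (27/4), g x
      = ∫ u in Set.Ioo (0:ℝ) (1/2), |27 - 54*u| • g (27*u*(1-u)) := by
  set φ : ℝ → ℝ := fun u => 27*u*(1-u) with hφ
  have hderiv : ∀ u ∈ Set.Ioo (0:ℝ) (1/2),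
      HasDerivWithinAt φ (27 - 54*u) (Set.Ioo (0:ℝ) (1/2)) u := by
    intro u _
    have h1 : HasDerivAt (fun y : ℝ => 27*y) 27 u := by
      simpa using (hasDerivAt_id u).const_mul (27:ℝ)
    have h2 : HasDerivAt (fun y : ℝ => 1-y) (-1) u := by
      simpa using (hasDerivAt_id u).const_sub (1:ℝ)
    have h3 : HasDerivAt φ (27 - 54*u) u := by
      exact (h1.mul h2).congr_deriv (by ring)
    exact h3.hasDerivWithinAt
  have hmono : StrictMonoOn φ (Set.Icc 0 (1/2)) := by
    intro a ha b hb hab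
    simp only [hφ]
    nlinarith [ha.1, ha.2, hb.1, hb.2]
  have hinj : Set.InjOn φ (Set.Ioo (0:ℝ) (1/2)) :=
    (hmono.injOn).mono Set.Ioo_subset_Icc_self
  have himage : φ '' Set.Ioo (0:ℝ) (1/2) = Set.Ioo (0:ℝ) (27/4) := by
    apply Set.Subset.antisymm
    · rintro x ⟨u, hu, rfl⟩
      refine ⟨?_, ?_⟩ <;> simp only [hφ] <;> nlinarith [hu.1, hu.2]
    · have hcont : ContinuousOn φ (Set.Icc (0:ℝ) (1/2)) := by
        apply Continuous.continuousOn; continuity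
      have h := intermediate_value_Ioo (by norm_num : (0:ℝ) ≤ 1/2) hcont
      have h0 : φ 0 = 0 := by simp [hφ]
      have h12 : φ (1/2) = 27/4 := by norm_num [hφ]
      rw [h0, h12] at h
      exact h
  rw [← himage]
  exact MeasureTheory.integral_image_eq_integral_abs_deriv_smul measurableSet_Ioo hderiv hinj g

end FussCatalanAux

/-- For
`W(x) = [9·(1 + √(1 − 4x/27))^(4/3) − 2^(4/3)·x^(2/3)] /
        (2^(5/3)·3^(3/2)·π·x^(1/3)·(1 + √(1 − 4x/27))^(2/3))`
on `(0, 27/4)`: `W ≥ 0` there, and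
`∫₀^{27/4} x^m·W(x) dx = A_m(3,2) = 2·C(3m+2, m)/(3m+2)`. -/
theorem stmt_15 :
    (∀ x ∈ Set.Ioo (0 : ℝ) (27 / 4),
      0 ≤ (9 * (1 + Real.sqrt (1 - 4 * x / 27)) ^ ((4 : ℝ) / 3) -
            (2 : ℝ) ^ ((4 : ℝ) / 3) * x ^ ((2 : ℝ) / 3)) /
          ((2 : ℝ) ^ ((5 : ℝ) / 3) * (3 : ℝ) ^ ((3 : ℝ) / 2) * π * x ^ ((1 : ℝ) / 3) *
            (1 + Real.sqrt (1 - 4 * x / 27)) ^ ((2 : ℝ) / 3))) ∧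
    ∀ m : ℕ,
      (∫ x in (0:ℝ)..(27 / 4),
        x ^ m * ((9 * (1 + Real.sqrt (1 - 4 * x / 27)) ^ ((4 : ℝ) / 3) -
            (2 : ℝ) ^ ((4 : ℝ) / 3) * x ^ ((2 : ℝ) / 3)) /
          ((2 : ℝ) ^ ((5 : ℝ) / 3) * (3 : ℝ) ^ ((3 : ℝ) / 2) * π * x ^ ((1 : ℝ) / 3) *
            (1 + Real.sqrt (1 - 4 * x / 27)) ^ ((2 : ℝ) / 3))))
      = raney 3 2 m ∧
      raney 3 2 m = 2 * (Nat.choose (3 * m + 2) m : ℝ) / (3 * (m : ℝ) + 2) := by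
  constructor
  · -- nonnegativity
    rintro x ⟨hx0, hx4⟩
    apply div_nonneg
    · have hb : (0:ℝ) ≤ (2:ℝ)^((4:ℝ)/3) * x^((2:ℝ)/3) := by positivity
      have e1 : ((2:ℝ)^((4:ℝ)/3))^3 = 16 := by
        rw [← Real.rpow_natCast ((2:ℝ)^((4:ℝ)/3)) 3, ← Real.rpow_mul (by norm_num : (0:ℝ) ≤ 2),
          show ((4:ℝ)/3) * ((3:ℕ):ℝ) = ((4:ℕ):ℝ) by norm_num, Real.rpow_natCast]
        norm_num
      have e2 : (x^((2:ℝ)/3))^3 = x^2 := by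
        rw [← Real.rpow_natCast (x^((2:ℝ)/3)) 3, ← Real.rpow_mul hx0.le,
          show ((2:ℝ)/3) * ((3:ℕ):ℝ) = ((2:ℕ):ℝ) by norm_num, Real.rpow_natCast]
      have hcube : ((2:ℝ)^((4:ℝ)/3) * x^((2:ℝ)/3))^3 ≤ 9^3 := by
        rw [mul_pow, e1, e2]
        nlinarith [hx0.le, hx4]
      have h1 : (2:ℝ)^((4:ℝ)/3) * x^((2:ℝ)/3) ≤ 9 :=
        le_of_pow_le_pow_left₀ (by norm_num) (by norm_num) hcube
      have hsn : 0 ≤ Real.sqrt (1 - 4*x/27) := Real.sqrt_nonneg _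
      have h2 : (1:ℝ) ≤ (1 + Real.sqrt (1 - 4*x/27))^((4:ℝ)/3) := by
        calc (1:ℝ) = 1^((4:ℝ)/3) := (Real.one_rpow _).symm
        _ ≤ _ := Real.rpow_le_rpow (by norm_num) (by linarith) (by norm_num)
      linarith
    · have hsn : 0 ≤ Real.sqrt (1 - 4*x/27) := Real.sqrt_nonneg _
      have := Real.pi_pos
      have d1 : (0:ℝ) < (2:ℝ)^((5:ℝ)/3) := Real.rpow_pos_of_pos (by norm_num) _
      have d2 : (0:ℝ) < (3:ℝ)^((3:ℝ)/2) := Real.rpow_pos_of_pos (by norm_num) _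
      have d3 : (0:ℝ) < x^((1:ℝ)/3) := Real.rpow_pos_of_pos hx0 _
      have d4 : (0:ℝ) < (1 + Real.sqrt (1 - 4*x/27))^((2:ℝ)/3) :=
        Real.rpow_pos_of_pos (by linarith) _
      positivity
  · intro m
    have hπ := Real.pi_pos
    have hmf : ((m.factorial : ℕ) : ℝ) ≠ 0 := by positivity
    have hmf2 : (((2*m+2).factorial : ℕ) : ℝ) ≠ 0 := by positivity
    constructor
    · -- the integral
      rw [intervalIntegral.integral_of_le (by norm_num : (0:ℝ) ≤ 27/4),
        MeasureTheory.integral_Ioc_eq_integral_Ioo,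
        chgvar (fun x => x ^ m * ((9 * (1 + Real.sqrt (1 - 4 * x / 27)) ^ ((4 : ℝ) / 3) -
            (2 : ℝ) ^ ((4 : ℝ) / 3) * x ^ ((2 : ℝ) / 3)) /
          ((2 : ℝ) ^ ((5 : ℝ) / 3) * (3 : ℝ) ^ ((3 : ℝ) / 2) * π * x ^ ((1 : ℝ) / 3) *
            (1 + Real.sqrt (1 - 4 * x / 27)) ^ ((2 : ℝ) / 3))))]
      have hstep : (∫ u in Set.Ioo (0:ℝ) (1/2), (27^(m+1) / (2*Real.sqrt 3*π)) * Gf m u)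
          = raney 3 2 m := by
        rw [MeasureTheory.integral_const_mul, ← MeasureTheory.integral_Ioc_eq_integral_Ioo,
          ← intervalIntegral.integral_of_le (by norm_num : (0:ℝ) ≤ 1/2), Gf_half, intG, Pval,
          raney_eq]
        have hsne := sqrt3_pos.ne'
        rw [show (27:ℝ)^(m+1) = 27 * 27^m by ring]
        have h27 : (27:ℝ)^m ≠ 0 := by positivity
        field_simp
        ring
      rw [← hstep]
      refine MeasureTheory.setIntegral_congr_fun measurableSet_Ioo (fun u hu => ?_)
      rw [smul_eq_mul]
      exact Wsubst m u hu.1 hu.2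
    · rw [raney_eq, raney_choose]
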